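/- arXiv:2108.10405 — 2 statements merged into one kernel-verified Lean document; each statement's English description precedes it below -/
import Mathlib

section
/- Let S ⊆ C^d ⊗ C^d be the span of the vectors (e_i ⊗ e_{i+k} − e_{i+1} ⊗ e_{i+k+1}) + (e_{i+k} ⊗ e_i − e_{i+k+1} ⊗ e_{i+1}) over all 1 ≤ i < d, k ≥ 0 with i + k < d. Then S is contained in the symmetric subspace of C^d ⊗ C^d and has dimension d(d−1)/2. -/
open Matrix

noncomputable def symSubspace (d : ℕ) : Submodule ℂ (Fin d × Fin d → ℂ) :=
  Submodule.span ℂ { x | ∃ v : Fin d → ℂ, x = fun p => v p.1 * v p.2 }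

/-- Standard basis vector e_a ⊗ e_b of ℂ^d ⊗ ℂ^d. -/
noncomputable def eTens {d : ℕ} (a b : Fin d) : Fin d × Fin d → ℂ :=
  fun p => if p = (a, b) then 1 else 0

/-- The special subspace S spanned by
(e_i ⊗ e_{i+k} − e_{i+1} ⊗ e_{i+k+1}) + (e_{i+k} ⊗ e_i − e_{i+k+1} ⊗ e_{i+1}),
written here with 0-indexed i. -/
noncomputable def specialSubspace (d : ℕ) : Submodule ℂ (Fin d × Fin d → ℂ) :=
  Submodule.span ℂ
    { x | ∃ (i k : ℕ) (h1 : i + 1 < d) (h2 : i + k + 1 < d),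
        x = (eTens ⟨i, by omega⟩ ⟨i + k, by omega⟩ -
              eTens ⟨i + 1, h1⟩ ⟨i + k + 1, h2⟩) +
            (eTens ⟨i + k, by omega⟩ ⟨i, by omega⟩ -
              eTens ⟨i + k + 1, h2⟩ ⟨i + 1, h1⟩) }


noncomputable def eVec {d : ℕ} (u : Fin d) : Fin d → ℂ := fun t => if t = u then 1 else 0

lemma qmem (d : ℕ) (v : Fin d → ℂ) : (fun p : Fin d × Fin d => v p.1 * v p.2) ∈ symSubspace d :=
  Submodule.subset_span ⟨v, rfl⟩

lemma pair_mem (d : ℕ) (u v : Fin d) : (eTens u v + eTens v u) ∈ symSubspace d := by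
  have key : eTens u v + eTens v u =
      (fun p : Fin d × Fin d => (eVec u + eVec v) p.1 * (eVec u + eVec v) p.2) -
      (fun p : Fin d × Fin d => eVec u p.1 * eVec u p.2) -
      (fun p : Fin d × Fin d => eVec v p.1 * eVec v p.2) := by
    funext p
    obtain ⟨p1, p2⟩ := p
    simp only [eTens, eVec, Pi.add_apply, Pi.sub_apply, Prod.mk.injEq]
    split_ifs <;> first | tauto | norm_num
  rw [key]
  exact Submodule.sub_mem _ (Submodule.sub_mem _ (qmem d _) (qmem d _)) (qmem d _)

noncomputable def gen (d i j : ℕ) (hij : i ≤ j) (h2 : j + 1 < d) : Fin d × Fin d → ℂ :=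
  (eTens ⟨i, by omega⟩ ⟨j, by omega⟩ - eTens ⟨i + 1, by omega⟩ ⟨j + 1, h2⟩) +
  (eTens ⟨j, by omega⟩ ⟨i, by omega⟩ - eTens ⟨j + 1, h2⟩ ⟨i + 1, by omega⟩)

open Classical in
/-- sum along the diagonal ray starting at position (a,b) -/
noncomputable def rayL (d a b : ℕ) : (Fin d × Fin d → ℂ) →ₗ[ℂ] ℂ :=
  ∑ p : Fin d × Fin d,
    if a ≤ (p.1 : ℕ) ∧ b ≤ (p.2 : ℕ) ∧ (p.1 : ℕ) - a = (p.2 : ℕ) - b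
    then LinearMap.proj p else 0

open Classical in
lemma rayL_apply (d a b : ℕ) (x : Fin d × Fin d → ℂ) :
    rayL d a b x = ∑ p : Fin d × Fin d,
      if a ≤ (p.1 : ℕ) ∧ b ≤ (p.2 : ℕ) ∧ (p.1 : ℕ) - a = (p.2 : ℕ) - b
      then x p else 0 := by
  rw [rayL, LinearMap.sum_apply]
  refine Finset.sum_congr rfl fun p _ => ?_
  split_ifs <;> simp

open Classical in
lemma rayL_eTens (d a b : ℕ) (u v : Fin d) :
    rayL d a b (eTens u v) =
      if a ≤ (u : ℕ) ∧ b ≤ (v : ℕ) ∧ (u : ℕ) - a = (v : ℕ) - b then 1 else 0 := by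
  rw [rayL_apply]
  have h : ∀ p : Fin d × Fin d,
      (if a ≤ (p.1 : ℕ) ∧ b ≤ (p.2 : ℕ) ∧ (p.1 : ℕ) - a = (p.2 : ℕ) - b
        then eTens u v p else 0) =
      (if p = (u, v) then
        (if a ≤ (p.1 : ℕ) ∧ b ≤ (p.2 : ℕ) ∧ (p.1 : ℕ) - a = (p.2 : ℕ) - b
          then (1:ℂ) else 0) else 0) := by
    intro p
    by_cases hp : p = (u, v) <;> simp [eTens, hp]
  rw [Finset.sum_congr rfl fun p _ => h p, Finset.sum_ite_eq' Finset.univ (u, v)]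
  simp

lemma rayL_gen (d a b i j : ℕ) (hij : i ≤ j) (h2 : j + 1 < d) :
    rayL d a b (gen d i j hij h2) =
      ((if a ≤ i ∧ b ≤ j ∧ i - a = j - b then 1 else 0) -
       (if a ≤ i + 1 ∧ b ≤ j + 1 ∧ i + 1 - a = j + 1 - b then 1 else 0)) +
      ((if a ≤ j ∧ b ≤ i ∧ j - a = i - b then 1 else 0) -
       (if a ≤ j + 1 ∧ b ≤ i + 1 ∧ j + 1 - a = i + 1 - b then 1 else 0)) := by
  unfold gen
  rw [map_add, map_sub, map_sub, rayL_eTens, rayL_eTens, rayL_eTens, rayL_eTens]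

def genIdx (d : ℕ) : Type := {p : Fin d × Fin d // (p.1 : ℕ) ≤ (p.2 : ℕ) ∧ (p.2 : ℕ) + 1 < d}

noncomputable instance (d : ℕ) : Fintype (genIdx d) := by unfold genIdx; infer_instance

noncomputable def genFam (d : ℕ) : genIdx d → (Fin d × Fin d → ℂ) :=
  fun x => gen d x.1.1.val x.1.2.val x.2.1 x.2.2

lemma genFam_indep (d : ℕ) : LinearIndependent ℂ (genFam d) := by
  rw [Fintype.linearIndependent_iff]
  intro c hc x0
  obtain ⟨⟨⟨i, hi⟩, ⟨j, hj⟩⟩, hij, h2⟩ := x0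
  simp only [Fin.val_mk] at hij h2
  have happ := congrArg (rayL d (i + 1) (j + 1)) hc
  rw [map_sum, map_zero] at happ
  simp only [_root_.map_smul] at happ
  have hoff : ∀ x : genIdx d, x ∈ Finset.univ →
      x ≠ (⟨(⟨i, hi⟩, ⟨j, hj⟩), hij, h2⟩ : genIdx d) →
      c x • rayL d (i + 1) (j + 1) (genFam d x) = 0 := by
    intro x _ hne
    obtain ⟨⟨⟨i', hi'⟩, ⟨j', hj'⟩⟩, hij', h2'⟩ := x
    simp only [Fin.val_mk] at hij' h2'
    have hne' : i' ≠ i ∨ j' ≠ j := by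
      by_contra hcon
      push_neg at hcon
      apply hne
      obtain ⟨rfl, rfl⟩ := hcon
      rfl
    have hkey : genFam d (⟨(⟨i', hi'⟩, ⟨j', hj'⟩), hij', h2'⟩ : genIdx d) =
        gen d i' j' hij' h2' := rfl
    rw [hkey, rayL_gen]
    have hval : ((if i + 1 ≤ i' ∧ j + 1 ≤ j' ∧ i' - (i+1) = j' - (j+1) then (1:ℂ) else 0) -
       (if i + 1 ≤ i' + 1 ∧ j + 1 ≤ j' + 1 ∧ i' + 1 - (i+1) = j' + 1 - (j+1) then 1 else 0)) +
      ((if i + 1 ≤ j' ∧ j + 1 ≤ i' ∧ j' - (i+1) = i' - (j+1) then 1 else 0) -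
       (if i + 1 ≤ j' + 1 ∧ j + 1 ≤ i' + 1 ∧ j' + 1 - (i+1) = i' + 1 - (j+1) then 1 else 0)) = 0 := by
      split_ifs <;> (try norm_num) <;> omega
    rw [hval, smul_zero]
  have hsum := Finset.sum_eq_single (s := Finset.univ)
      (f := fun x : genIdx d => c x • rayL d (i + 1) (j + 1) (genFam d x))
      (⟨(⟨i, hi⟩, ⟨j, hj⟩), hij, h2⟩ : genIdx d) hoff
      (fun h => absurd (Finset.mem_univ _) h)
  rw [hsum] at happ
  beta_reduce at happ
  have hkey : genFam d (⟨(⟨i, hi⟩, ⟨j, hj⟩), hij, h2⟩ : genIdx d) = gen d i j hij h2 := rfl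
  rw [hkey, rayL_gen] at happ
  have hval : ((if i + 1 ≤ i ∧ j + 1 ≤ j ∧ i - (i+1) = j - (j+1) then (1:ℂ) else 0) -
     (if i + 1 ≤ i + 1 ∧ j + 1 ≤ j + 1 ∧ i + 1 - (i+1) = j + 1 - (j+1) then 1 else 0)) +
    ((if i + 1 ≤ j ∧ j + 1 ≤ i ∧ j - (i+1) = i - (j+1) then 1 else 0) -
     (if i + 1 ≤ j + 1 ∧ j + 1 ≤ i + 1 ∧ j + 1 - (i+1) = i + 1 - (j+1) then 1 else 0)) =
    -1 - (if i = j then 1 else 0) := by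
    split_ifs <;> (try norm_num) <;> omega
  rw [hval] at happ
  have hne0 : (-1 - (if i = j then (1:ℂ) else 0)) ≠ 0 := by
    split_ifs <;> norm_num
  rcases smul_eq_zero.mp happ with h | h
  · exact h
  · exact absurd h hne0

lemma sum_ite_le (m : ℕ) : ∀ n : ℕ, (∑ i ∈ Finset.range n, if i ≤ m then 1 else 0) = min (m + 1) n := by
  intro n
  induction n with
  | zero => simp
  | succ n ih =>
    rw [Finset.sum_range_succ, ih]
    split_ifs <;> omega

lemma sum_tri : ∀ n : ℕ, (∑ j ∈ Finset.range n, if j + 1 < n then j + 1 else 0) = n * (n - 1) / 2 := by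
  intro n
  cases n with
  | zero => simp
  | succ n =>
    rw [Finset.sum_range_succ]
    have h1 : (∑ j ∈ Finset.range n, if j + 1 < n + 1 then j + 1 else 0) =
        ∑ j ∈ Finset.range n, (j + 1) := by
      refine Finset.sum_congr rfl fun j hj => ?_
      rw [if_pos (by simpa using Finset.mem_range.mp hj)]
    rw [h1, if_neg (by omega)]
    have h2 : (∑ j ∈ Finset.range n, (j + 1)) = ∑ j ∈ Finset.range (n + 1), j := by
      rw [Finset.sum_range_succ' (fun j => j) n]
      simp
    rw [h2]
    have := Finset.sum_range_id_mul_two (n + 1)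
    omega


open Classical in
lemma card_genIdx (d : ℕ) : Fintype.card (genIdx d) = d * (d - 1) / 2 := by
  rw [show Fintype.card (genIdx d) = Fintype.card
      {p : Fin d × Fin d // (p.1 : ℕ) ≤ (p.2 : ℕ) ∧ (p.2 : ℕ) + 1 < d} from rfl]
  rw [Fintype.card_subtype]
  rw [Finset.card_filter]
  rw [Fintype.sum_prod_type_right]
  have hinner : ∀ j : Fin d, (∑ i : Fin d, if (i : ℕ) ≤ (j : ℕ) ∧ (j : ℕ) + 1 < d then 1 else 0) =
      (if (j : ℕ) + 1 < d then (j : ℕ) + 1 else 0) := by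
    intro j
    by_cases hj : (j : ℕ) + 1 < d
    · rw [if_pos hj]
      simp only [hj, and_true]
      rw [Fin.sum_univ_eq_sum_range (fun i => if i ≤ (j : ℕ) then 1 else 0), sum_ite_le]
      omega
    · simp [hj]
  rw [Finset.sum_congr rfl fun j _ => hinner j]
  rw [Fin.sum_univ_eq_sum_range (fun j => if j + 1 < d then j + 1 else 0), sum_tri]

lemma special_eq (d : ℕ) :
    specialSubspace d = Submodule.span ℂ (Set.range (genFam d)) := by
  unfold specialSubspace
  congr 1
  ext x
  constructor
  · rintro ⟨i, k, h1, h2, rfl⟩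
    exact ⟨⟨(⟨i, by omega⟩, ⟨i + k, by omega⟩), ⟨by simp, by simpa using h2⟩⟩, rfl⟩
  · rintro ⟨⟨⟨⟨i, hi⟩, ⟨j, hj⟩⟩, hij, h2⟩, rfl⟩
    simp only [genFam]
    obtain ⟨k, rfl⟩ : ∃ k, j = i + k := ⟨j - i, by simp at hij; omega⟩
    exact ⟨i, k, by simp at h2; omega, by simpa using h2, rfl⟩

theorem stmt15 (d : ℕ) :
    specialSubspace d ≤ symSubspace d ∧
    Module.finrank ℂ (specialSubspace d) = d * (d - 1) / 2 := by
  constructor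
  · unfold specialSubspace
    rw [Submodule.span_le]
    rintro x ⟨i, k, h1, h2, rfl⟩
    rw [SetLike.mem_coe]
    have h := Submodule.sub_mem _
      (pair_mem d ⟨i, by omega⟩ ⟨i + k, by omega⟩)
      (pair_mem d ⟨i + 1, h1⟩ ⟨i + k + 1, h2⟩)
    convert h using 1
    abel
  · rw [special_eq d, finrank_span_eq_card (genFam_indep d), card_genIdx]
end

section
/- Let S ⊆ C^d ⊗ C^d be the span of (e_i ⊗ e_{i+k} − e_{i+1} ⊗ e_{i+k+1}) + (e_{i+k} ⊗ e_i − e_{i+k+1} ⊗ e_{i+1}) over all 1 ≤ i < d, k ≥ 0, i + k < d. Then every quantum state ρ on C^d ⊗ C^d with range contained in S has the property that ρ^Γ (the partial transpose of ρ) has a negative eigenvalue. -/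
open Matrix ComplexOrder

noncomputable def ptrans {d : ℕ} (A : Matrix (Fin d × Fin d) (Fin d × Fin d) ℂ) :
    Matrix (Fin d × Fin d) (Fin d × Fin d) ℂ :=
  fun p q => A (p.1, q.2) (q.1, p.2)

lemma eTens_swap {d : ℕ} (u v a b : Fin d) : eTens u v (a, b) = eTens v u (b, a) := by
  simp only [eTens, Prod.mk.injEq]
  exact if_congr and_comm rfl rfl

lemma zsum_eTens {d : ℕ} (m : ℕ) (u v : Fin d) :
    ∑ p : Fin d × Fin d, (if (p.2 : ℕ) = (p.1 : ℕ) + m then eTens u v p else 0)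
      = if (v : ℕ) = (u : ℕ) + m then 1 else 0 := by
  rw [Finset.sum_eq_single (u, v)]
  · simp [eTens]
  · intro p _ hp
    simp [eTens, hp]
  · intro h; simp at h

lemma zsum_split {d : ℕ} (C : Fin d × Fin d → Prop) [DecidablePred C]
    (f g h e : Fin d × Fin d → ℂ) :
    ∑ p : Fin d × Fin d, (if C p then ((f - g) + (h - e)) p else 0)
      = (∑ p : Fin d × Fin d, (if C p then f p else 0))
        - (∑ p : Fin d × Fin d, (if C p then g p else 0))
        + ((∑ p : Fin d × Fin d, (if C p then h p else 0))
        - (∑ p : Fin d × Fin d, (if C p then e p else 0))) := by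
  rw [← Finset.sum_sub_distrib, ← Finset.sum_sub_distrib, ← Finset.sum_add_distrib]
  refine Finset.sum_congr rfl fun p _ => ?_
  simp only [Pi.add_apply, Pi.sub_apply]
  split_ifs <;> simp

lemma special_props {d : ℕ} {x : Fin d × Fin d → ℂ} (hx : x ∈ specialSubspace d) :
    (∀ a b : Fin d, x (a, b) = x (b, a)) ∧
    (∀ m : ℕ, ∑ p : Fin d × Fin d, (if (p.2 : ℕ) = (p.1 : ℕ) + m then x p else 0) = 0) := by
  induction hx using Submodule.span_induction with
  | mem y hy =>
    obtain ⟨i, k, h1, h2, rfl⟩ := hy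
    constructor
    · intro a b
      simp only [Pi.add_apply, Pi.sub_apply]
      rw [eTens_swap ⟨i, by omega⟩ ⟨i + k, by omega⟩ a b,
          eTens_swap ⟨i + 1, h1⟩ ⟨i + k + 1, h2⟩ a b,
          eTens_swap ⟨i + k, by omega⟩ ⟨i, by omega⟩ a b,
          eTens_swap ⟨i + k + 1, h2⟩ ⟨i + 1, h1⟩ a b]
      ring
    · intro m
      rw [zsum_split, zsum_eTens, zsum_eTens, zsum_eTens, zsum_eTens]
      simp only [Fin.val_mk]
      split_ifs <;> first | (exfalso; omega) | norm_num
  | zero => exact ⟨fun a b => rfl, fun m => by simp⟩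
  | add y z hy hz ihy ihz =>
    refine ⟨fun a b => by simp [ihy.1 a b, ihz.1 a b], fun m => ?_⟩
    have : ∀ p : Fin d × Fin d, (if (p.2 : ℕ) = (p.1 : ℕ) + m then (y + z) p else 0)
        = (if (p.2 : ℕ) = (p.1 : ℕ) + m then y p else 0) + (if (p.2 : ℕ) = (p.1 : ℕ) + m then z p else 0) := by
      intro p; split_ifs <;> simp
    simp only [this, Finset.sum_add_distrib, ihy.2 m, ihz.2 m, add_zero]
  | smul c y hy ihy =>
    refine ⟨fun a b => by simp [ihy.1 a b], fun m => ?_⟩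
    have : ∀ p : Fin d × Fin d, (if (p.2 : ℕ) = (p.1 : ℕ) + m then (c • y) p else 0)
        = c * (if (p.2 : ℕ) = (p.1 : ℕ) + m then y p else 0) := by
      intro p; split_ifs <;> simp
    simp only [this, ← Finset.mul_sum, ihy.2 m, mul_zero]

theorem stmt16 (d : ℕ) (ρ : Matrix (Fin d × Fin d) (Fin d × Fin d) ℂ)
    (hρ : ρ.PosSemidef) (htr : ρ.trace = 1)
    (hrange : ∀ x : Fin d × Fin d → ℂ, ρ.mulVec x ∈ specialSubspace d) :
    ∀ h : (ptrans ρ).IsHermitian, ∃ i, h.eigenvalues i < 0 := by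
  have hcol : ∀ t : Fin d × Fin d, (fun q => ρ q t) ∈ specialSubspace d := by
    intro t
    have hx := hrange (fun p => if p = t then 1 else 0)
    have heq : ρ.mulVec (fun p => if p = t then 1 else 0) = fun q => ρ q t := by
      funext q
      simp [Matrix.mulVec, dotProduct]
    rwa [heq] at hx
  have S1 : ∀ (a b : Fin d) (t : Fin d × Fin d), ρ (a, b) t = ρ (b, a) t :=
    fun a b t => (special_props (hcol t)).1 a b
  have S2 : ∀ (t : Fin d × Fin d) (m : ℕ),
      ∑ p : Fin d × Fin d, (if (p.2 : ℕ) = (p.1 : ℕ) + m then ρ p t else 0) = 0 :=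
    fun t m => (special_props (hcol t)).2 m
  intro h
  by_contra hcon
  push_neg at hcon
  have hPSD : (ptrans ρ).PosSemidef := (Matrix.IsHermitian.posSemidef_iff_eigenvalues_nonneg h).mpr (fun i => hcon i)
  have herm : ρ.IsHermitian := hρ.1
  -- null row lemma for ptrans ρ
  obtain ⟨B, hB⟩ : ∃ B, ptrans ρ = Bᴴ * B := by
    open scoped MatrixOrder in
    obtain ⟨B, hB⟩ := CStarAlgebra.nonneg_iff_eq_star_mul_self.mp hPSD.nonneg
    exact ⟨B, hB⟩
  have nullrow : ∀ P Q : Fin d × Fin d, ptrans ρ P P = 0 → ptrans ρ P Q = 0 := by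
    intro P Q hPP
    have hcolzero : ∀ j, B j P = 0 := by
      have h1 : ∑ j, (Complex.normSq (B j P) : ℂ) = 0 := by
        rw [hB] at hPP
        rw [← hPP, Matrix.mul_apply]
        refine Finset.sum_congr rfl fun j _ => ?_
        simp [Matrix.conjTranspose_apply, Complex.normSq_eq_conj_mul_self]
      have h2 : ∑ j, Complex.normSq (B j P) = 0 := by
        exact_mod_cast h1
      intro j
      have := (Finset.sum_eq_zero_iff_of_nonneg
        (fun j _ => Complex.normSq_nonneg (B j P))).mp h2 j (Finset.mem_univ j)
      exact Complex.normSq_eq_zero.mp this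
    rw [hB, Matrix.mul_apply]
    refine Finset.sum_eq_zero fun j _ => ?_
    simp [Matrix.conjTranspose_apply, hcolzero j]
  -- support nonempty
  have hsupp : ∃ p : Fin d × Fin d, ρ p p ≠ 0 := by
    by_contra hc
    push_neg at hc
    rw [Matrix.trace] at htr
    simp [Matrix.diag, hc] at htr
  -- diagonal swap invariance of support
  have diagswap : ∀ x y : Fin d, ρ (y, x) (y, x) = ρ (x, y) (x, y) := by
    intro x y
    have h1 : ρ (y, x) (y, x) = ρ (x, y) (y, x) := S1 y x (y, x)
    have h2 : ρ (x, y) (y, x) = star (ρ (y, x) (x, y)) := by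
      rw [← herm.apply (y, x) (x, y), star_star]
    have h3 : ρ (y, x) (x, y) = ρ (x, y) (x, y) := S1 y x (x, y)
    have h4 : star (ρ (x, y) (x, y)) = ρ (x, y) (x, y) := herm.apply (x, y) (x, y)
    rw [h1, h2, h3, h4]
  -- maximal offset
  set T : Finset (Fin d × Fin d) := Finset.univ.filter (fun p => ρ p p ≠ 0) with hT
  have hTne : T.Nonempty := by
    obtain ⟨p, hp⟩ := hsupp
    exact ⟨p, by simp [hT, hp]⟩
  obtain ⟨p0, hp0T, hmax⟩ := T.exists_max_image
    (fun p => ((p.2 : ℕ) - (p.1 : ℕ)) + ((p.1 : ℕ) - (p.2 : ℕ))) hTne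
  set k : ℕ := ((p0.2 : ℕ) - (p0.1 : ℕ)) + ((p0.1 : ℕ) - (p0.2 : ℕ)) with hk
  have hmax' : ∀ p : Fin d × Fin d, ρ p p ≠ 0 →
      ((p.2 : ℕ) - (p.1 : ℕ)) + ((p.1 : ℕ) - (p.2 : ℕ)) ≤ k := by
    intro p hp
    exact hmax p (by simp [hT, hp])
  have hp0 : ρ p0 p0 ≠ 0 := by
    have := hp0T
    simp [hT] at this
    exact this
  -- get (a,b) in support with b = a + k
  obtain ⟨a, b, hab, hbk⟩ : ∃ a b : Fin d, ρ (a, b) (a, b) ≠ 0 ∧ (b : ℕ) = (a : ℕ) + k := by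
    rcases le_total (p0.1 : ℕ) (p0.2 : ℕ) with hle | hle
    · exact ⟨p0.1, p0.2, by simpa using hp0, by omega⟩
    · refine ⟨p0.2, p0.1, ?_, by omega⟩
      rw [diagswap]
      simpa using hp0
  -- key claim
  have key : ∀ p q : Fin d × Fin d, (p.2 : ℕ) = (p.1 : ℕ) + k → (q.2 : ℕ) = (q.1 : ℕ) + k →
      (p.1 : ℕ) < (q.1 : ℕ) → ρ p q = 0 := by
    intro p q hp hq hlt
    have hPnull : ρ (p.1, q.2) (p.1, q.2) = 0 := by
      by_contra hne
      have := hmax' (p.1, q.2) hne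
      simp only at this
      omega
    have h0 : ptrans ρ (p.1, q.2) (p.1, q.2) = 0 := hPnull
    have := nullrow (p.1, q.2) (q.1, p.2) h0
    simpa [ptrans] using this
  -- conclude
  have hsum := S2 (a, b) k
  rw [Finset.sum_eq_single (a, b)] at hsum
  · rw [if_pos hbk] at hsum
    exact hab hsum
  · intro p _ hpne
    by_cases hc : (p.2 : ℕ) = (p.1 : ℕ) + k
    · rw [if_pos hc]
      have hne1 : (p.1 : ℕ) ≠ (a : ℕ) := by
        intro heq
        apply hpne
        have h1 : p.1 = a := Fin.ext heq
        have h2 : p.2 = b := Fin.ext (by omega)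
        exact Prod.ext h1 h2
      rcases Nat.lt_or_ge (p.1 : ℕ) (a : ℕ) with hlt | hge
      · exact key p (a, b) hc hbk hlt
      · have hgt : (a : ℕ) < (p.1 : ℕ) := by omega
        have := key (a, b) p hbk hc hgt
        calc ρ p (a, b) = star (star (ρ p (a, b))) := (star_star _).symm
          _ = star (ρ (a, b) p) := by rw [herm.apply (a, b) p]
          _ = 0 := by rw [this, star_zero]
    · rw [if_neg hc]
  · intro hmem
    simp at hmem
end
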